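/- Let $n \ge 2$, let $l \mid n$ with $1 \le l < n$, and let $u \in M_n(\mathbb{C})$ be the cyclic permutation unitary. Then the C*-subalgebra (equivalently, the unital *-subalgebra) of $M_n(\mathbb{C})$ generated by the diagonal matrix units $e_{11}, \dots, e_{nn}$ together with $u^l$ is *-isomorphic to the direct sum of $l$ copies of $M_{n/l}(\mathbb{C})$. -/

import Mathlib

open Matrix
open Fin.NatCast

/-- The cyclic permutation unitary in `Mₙ(ℂ)`. -/
def cyclicShift (n : ℕ) [NeZero n] : Matrix (Fin n) (Fin n) ℂ :=
  Matrix.of fun i j => if j = i + 1 then 1 else 0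

lemma cyclicShift_pow (n : ℕ) [NeZero n] (k : ℕ) :
    (cyclicShift n) ^ k = Matrix.of fun i j => if j = i + (k : Fin n) then 1 else 0 := by
  induction k with
  | zero =>
    ext i j
    simp [Matrix.one_apply, eq_comm]
  | succ k ih =>
    rw [pow_succ, ih]
    ext i j
    simp only [Matrix.mul_apply, cyclicShift, Matrix.of_apply]
    rw [Finset.sum_eq_single (i + (k : Fin n))]
    · push_cast
      simp [add_assoc]
    · intro b _ hb
      simp [hb]
    · simp

lemma stdBasis_mul_cyclicShift_pow (m : ℕ) [NeZero m] (p : Fin m) (k : ℕ) :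
    Matrix.single p p (1:ℂ) * (cyclicShift m) ^ k
      = Matrix.single p (p + (k : Fin m)) 1 := by
  rw [cyclicShift_pow]
  ext i j
  simp only [Matrix.mul_apply, Matrix.single, Matrix.of_apply]
  rw [Finset.sum_eq_single p]
  · by_cases h : p = i <;> by_cases h2 : j = p + (k : Fin m) <;>
      simp_all [eq_comm]
  · intro b _ hb
    simp [Ne.symm hb]
  · simp

lemma blockDiagonal_single (m l : ℕ) (r : Fin l) (p q : Fin m) :
    Matrix.blockDiagonal (Pi.single r (Matrix.single p q (1:ℂ)))
      = Matrix.single (p, r) (q, r) 1 := by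
  ext ⟨a, b⟩ ⟨c, d⟩
  simp only [Matrix.blockDiagonal_apply, Matrix.single, Matrix.of_apply,
    Pi.single_apply, Prod.mk.injEq]
  by_cases hbd : b = d
  · subst hbd
    by_cases hbr : b = r
    · subst hbr
      simp
    · simp [Pi.single_eq_of_ne hbr]
      aesop
  · simp [hbd]
    aesop

/-- Let `n ≥ 2` and `l ∣ n` with `1 ≤ l < n`, and let `u` be the cyclic permutation
unitary.  The (automatically closed, hence C*-) unital *-subalgebra of `Mₙ(ℂ)` generated
by the diagonal matrix units `e₁₁, …, eₙₙ` together with `u^l` is *-isomorphic to the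
direct sum of `l` copies of `M_{n/l}(ℂ)`. -/
theorem starSubalgebra_diag_and_shift_iso (n l : ℕ) [NeZero n] (hn : 2 ≤ n)
    (hl : l ∣ n) (hl1 : 1 ≤ l) (hln : l < n)
    (u : Matrix (Fin n) (Fin n) ℂ) (hu : u = cyclicShift n)
    (S : Set (Matrix (Fin n) (Fin n) ℂ))
    (hS : S = {x | ∃ i : Fin n, x = Matrix.single i i 1} ∪ {u ^ l}) :
    Nonempty ((StarAlgebra.adjoin ℂ S) ≃⋆ₐ[ℂ]
      (Fin l → Matrix (Fin (n / l)) (Fin (n / l)) ℂ)) := by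
  subst hu hS
  set m : ℕ := n / l with hm
  have hml : m * l = n := Nat.div_mul_cancel hl
  have hm0 : m ≠ 0 := by
    intro h; rw [h] at hml; omega
  haveI : NeZero m := ⟨hm0⟩
  haveI : NeZero l := ⟨by omega⟩
  have hm2 : 2 ≤ m := by
    rcases Nat.lt_or_ge m 2 with h | h
    · interval_cases m <;> omega
    · exact h
  set ε : Fin m × Fin l ≃ Fin n := finProdFinEquiv.trans (finCongr hml) with hε
  have hεval : ∀ (q : Fin m) (r : Fin l), (ε (q, r)).val = r + l * q := by
    intro q r
    simp [hε, finProdFinEquiv]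
  -- the star algebra homomorphism
  set Φ₀ : (Fin l → Matrix (Fin m) (Fin m) ℂ) →ₐ[ℂ] Matrix (Fin n) (Fin n) ℂ :=
    (Matrix.reindexAlgEquiv ℂ ℂ ε).toAlgHom.comp
      { Matrix.blockDiagonalRingHom (Fin m) (Fin l) ℂ with
        commutes' := fun c => by
          ext ⟨a, b⟩ ⟨c', d⟩
          simp [Matrix.blockDiagonalRingHom, Matrix.blockDiagonal_apply,
            Matrix.algebraMap_matrix_apply, Prod.ext_iff,
              RingHom.coe_mk, MonoidHom.coe_mk, OneHom.coe_mk]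
          all_goals change Matrix.blockDiagonal _ _ _ = _
          all_goals simp [Matrix.blockDiagonal_apply, Matrix.algebraMap_matrix_apply, Prod.ext_iff]
          aesop } with hΦ₀
  set Φ : (Fin l → Matrix (Fin m) (Fin m) ℂ) →⋆ₐ[ℂ] Matrix (Fin n) (Fin n) ℂ :=
    { Φ₀ with
      map_star' := fun A => by
        show Matrix.reindex ε ε (Matrix.blockDiagonal (star A)) =
          star (Matrix.reindex ε ε (Matrix.blockDiagonal A))
        ext i j
        obtain ⟨⟨a, b⟩, rfl⟩ := ε.surjective i
        obtain ⟨⟨c, d⟩, rfl⟩ := ε.surjective j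
        simp only [Matrix.reindex_apply, Matrix.submatrix_apply, Equiv.symm_apply_apply,
          Matrix.star_eq_conjTranspose, Matrix.conjTranspose_apply, Matrix.blockDiagonal_apply,
          Pi.star_apply]
        rcases eq_or_ne b d with rfl | h
        · simp
        · simp [h, Ne.symm h] } with hΦdef
  have hΦ : ∀ A, Φ A = (Matrix.blockDiagonal A).submatrix ε.symm ε.symm := fun A => rfl
  -- arithmetic: shifting by l corresponds to shifting the block index by one
  have hadd : ∀ (q : Fin m) (r : Fin l), ε (q, r) + (l : Fin n) = ε (q + 1, r) := by
    intro q r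
    apply Fin.ext
    have hq := q.isLt
    have hr := r.isLt
    rw [Fin.val_add, hεval, hεval]
    have hl' : ((l : ℕ) : Fin n).val = l := by
      rw [Fin.val_natCast, Nat.mod_eq_of_lt hln]
    rw [hl']
    have h1 : ((1 : Fin m)).val = 1 := by
      rw [Fin.val_one', Nat.mod_eq_of_lt hm2]
    have hq1 : ((q + 1 : Fin m)).val = (q.val + 1) % m := by
      rw [Fin.val_add, h1]
    rw [hq1]
    rcases Nat.lt_or_ge (q.val + 1) m with h | h
    · rw [Nat.mod_eq_of_lt h, Nat.mod_eq_of_lt]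
      · ring
      · have : l * (q.val + 2) ≤ l * m := Nat.mul_le_mul_left _ (by omega)
        nlinarith
    · have hqm : q.val + 1 = m := by omega
      rw [hqm, Nat.mod_self, Nat.mul_zero, Nat.add_zero]
      have : (r : ℕ) + l * q.val + l = r + n := by
        rw [← hml]
        have h2 : m * l = (q.val + 1) * l := by rw [hqm]
        rw [h2]; ring
      rw [this, Nat.add_mod_right, Nat.mod_eq_of_lt (hr.trans hln)]
  have hΦu : Φ (fun _ => cyclicShift m) = cyclicShift n ^ l := by
    rw [cyclicShift_pow, hΦ]
    ext i j
    obtain ⟨⟨q, r⟩, rfl⟩ := ε.surjective i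
    obtain ⟨⟨q', r'⟩, rfl⟩ := ε.surjective j
    simp only [Matrix.submatrix_apply, Equiv.symm_apply_apply, Matrix.blockDiagonal_apply,
      Matrix.of_apply, cyclicShift]
    simp only [hadd, Equiv.apply_eq_iff_eq, Prod.mk.injEq]
    rcases eq_or_ne r r' with rfl | h
    · simp [eq_comm]
    · simp [h, Ne.symm h]
  have hΦe : ∀ (r : Fin l) (p q : Fin m),
      Φ (Pi.single r (Matrix.single p q (1:ℂ)))
        = Matrix.single (ε (p, r)) (ε (q, r)) 1 := by
    intro r p q
    rw [hΦ, blockDiagonal_single]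
    ext i j
    obtain ⟨a, rfl⟩ := ε.surjective i
    obtain ⟨b, rfl⟩ := ε.surjective j
    simp only [Matrix.submatrix_apply, Equiv.symm_apply_apply, Matrix.single,
      Matrix.of_apply, Equiv.apply_eq_iff_eq]
  -- every image is in the adjoined star subalgebra
  have hmemS : ∀ (r : Fin l) (p q : Fin m),
      Φ (Pi.single r (Matrix.single p q (1:ℂ))) ∈ StarAlgebra.adjoin ℂ
        ({x | ∃ i : Fin n, x = Matrix.single i i 1} ∪ {cyclicShift n ^ l}) := by
    intro r p q
    set k : ℕ := (q - p : Fin m).val with hk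
    have hpk : p + (k : Fin m) = q := by
      rw [hk, Fin.cast_val_eq_self]
      abel
    have key : Pi.single r (Matrix.single p q (1:ℂ))
        = Pi.single r (Matrix.single p p (1:ℂ)) * ((fun _ => cyclicShift m) ^ k) := by
      funext s
      rcases eq_or_ne s r with rfl | h
      · simp only [Pi.mul_apply, Pi.pow_apply, Pi.single_eq_same]
        rw [stdBasis_mul_cyclicShift_pow, hpk]
      · simp [Pi.single_eq_of_ne h]
    rw [key, _root_.map_mul, _root_.map_pow, hΦu, hΦe]
    refine mul_mem ?_ (pow_mem ?_ k)
    · exact StarAlgebra.subset_adjoin ℂ _ (Or.inl ⟨ε (p, r), rfl⟩)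
    · exact StarAlgebra.subset_adjoin ℂ _ (Or.inr rfl)
  have hmem : ∀ A, Φ A ∈ StarAlgebra.adjoin ℂ
      ({x | ∃ i : Fin n, x = Matrix.single i i 1} ∪ {cyclicShift n ^ l}) := by
    intro A
    have hA : A = ∑ r : Fin l, ∑ p : Fin m, ∑ q : Fin m,
        (Pi.single r (Matrix.single p q (A r p q)) :
          Fin l → Matrix (Fin m) (Fin m) ℂ) := by
      funext s
      ext i j
      simp [Finset.sum_apply, Matrix.sum_apply, Pi.single_apply, Matrix.single,
        apply_ite (fun M : Matrix (Fin m) (Fin m) ℂ => M i j), ite_and, Matrix.of_apply,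
        Finset.sum_ite_eq, Finset.sum_ite_eq']
    rw [hA, map_sum]
    refine sum_mem fun r _ => ?_
    rw [map_sum]
    refine sum_mem fun p _ => ?_
    rw [map_sum]
    refine sum_mem fun q _ => ?_
    have h2 : (Pi.single r (Matrix.single p q (A r p q)) :
        Fin l → Matrix (Fin m) (Fin m) ℂ)
        = A r p q • (Pi.single r (Matrix.single p q (1:ℂ)) :
          Fin l → Matrix (Fin m) (Fin m) ℂ) := by
      rw [← Pi.single_smul, Matrix.smul_single, smul_eq_mul, mul_one]
    rw [h2, _root_.map_smul]
    exact SMulMemClass.smul_mem _ (hmemS r p q)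
  -- the adjoined subalgebra is contained in the range
  have hinj : Function.Injective Φ := by
    intro A B h
    rw [hΦ, hΦ] at h
    exact Matrix.blockDiagonal_injective ((Matrix.reindex ε ε).injective h)
  have hle : StarAlgebra.adjoin ℂ
      ({x | ∃ i : Fin n, x = Matrix.single i i 1} ∪ {cyclicShift n ^ l}) ≤ Φ.range := by
    apply StarAlgebra.adjoin_le
    rintro x (⟨i, rfl⟩ | rfl)
    · refine ⟨Pi.single (ε.symm i).2
        (Matrix.single (ε.symm i).1 (ε.symm i).1 1), ?_⟩
      show Φ _ = _
      rw [hΦe]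
      simp
    · exact ⟨fun _ => cyclicShift m, hΦu⟩
  set Φ' := Φ.codRestrict _ hmem with hΦ'
  have hbij : Function.Bijective Φ' := by
    constructor
    · exact (StarAlgHom.injective_codRestrict _ _ _).mpr hinj
    · rintro ⟨y, hy⟩
      obtain ⟨A, hA⟩ := hle hy
      exact ⟨A, Subtype.ext hA⟩
  exact ⟨(StarAlgEquiv.ofBijective Φ' hbij).symm⟩
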